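/- arXiv:2605.10113 — 4 statements merged into one kernel-verified Lean document; each statement's English description precedes it below -/
import Mathlib

section
/- If y ∈ ℚ⟦z⟧ is a power series with constant term 1 satisfying (z³ − z²)y² + (1 − 3z + 2z²)y + (2z − 1) = 0, then its coefficient sequence m(n) = [zⁿ] y satisfies the holonomic recurrence 4(n+1)·m(n) + 4·m(n+1) − (9n+32)·m(n+2) + 2(3n+14)·m(n+3) − (n+6)·m(n+4) = 0 for all n ≥ 0, together with m(0)=1, m(1)=1, m(2)=2, m(3)=5. -/
open PowerSeries in
private lemma aux_coeff_stmt2 (f : ℚ⟦X⟧) (k : ℕ) :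
    coeff k (X * d⁄dX ℚ f) = k * coeff k f := by
  cases k with
  | zero => simp
  | succ k => rw [coeff_succ_X_mul, coeff_derivative]; push_cast; ring

open PowerSeries in
theorem stmt2 (y : PowerSeries ℚ) (h1 : constantCoeff y = 1)
    (h2 : (X ^ 3 - X ^ 2) * y ^ 2 + (1 - 3 * X + 2 * X ^ 2) * y + (2 * X - 1) = 0) :
    (∀ n : ℕ, 4 * (n + 1 : ℚ) * coeff n y + 4 * coeff (n + 1) y
      - (9 * n + 32) * coeff (n + 2) y + 2 * (3 * n + 14) * coeff (n + 3) y
      - (n + 6) * coeff (n + 4) y = 0) ∧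
    coeff 0 y = 1 ∧ coeff 1 y = 1 ∧ coeff 2 y = 2 ∧ coeff 3 y = 5 := by
  have e2 : (2 : ℚ⟦X⟧) = C 2 := (map_ofNat (C (R := ℚ)) 2).symm
  have e3 : (3 : ℚ⟦X⟧) = C 3 := (map_ofNat (C (R := ℚ)) 3).symm
  have e4 : (4 : ℚ⟦X⟧) = C 4 := (map_ofNat (C (R := ℚ)) 4).symm
  have e6 : (6 : ℚ⟦X⟧) = C 6 := (map_ofNat (C (R := ℚ)) 6).symm
  have e7 : (7 : ℚ⟦X⟧) = C 7 := (map_ofNat (C (R := ℚ)) 7).symm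
  have e9 : (9 : ℚ⟦X⟧) = C 9 := (map_ofNat (C (R := ℚ)) 9).symm
  have e10 : (10 : ℚ⟦X⟧) = C 10 := (map_ofNat (C (R := ℚ)) 10).symm
  have e14 : (14 : ℚ⟦X⟧) = C 14 := (map_ofNat (C (R := ℚ)) 14).symm
  -- initial values
  have m0 : coeff 0 y = 1 := by rw [coeff_zero_eq_constantCoeff, h1]
  have sq0 : coeff 0 (y ^ 2) = 1 := by
    rw [coeff_zero_eq_constantCoeff, map_pow, h1, one_pow]
  have sq1 : coeff 1 (y ^ 2) = 2 * coeff 1 y := by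
    rw [sq, coeff_mul]
    rw [show (Finset.HasAntidiagonal.antidiagonal 1 : Finset (ℕ × ℕ)) = {(0,1),(1,0)} from rfl]
    simp [coeff_zero_eq_constantCoeff, h1]
    ring
  have h2' : X ^ 3 * y ^ 2 - X ^ 2 * y ^ 2 + X ^ 0 * y - C 3 * (X ^ 1 * y)
      + C 2 * (X ^ 2 * y) + (C 2 * X ^ 1 - X ^ 0) = 0 := by
    rw [← e2, ← e3]; linear_combination h2
  have c1 := congrArg (coeff 1) h2'
  have c2 := congrArg (coeff 2) h2'
  have c3 := congrArg (coeff 3) h2'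
  simp [coeff_X_pow_mul', coeff_C_mul, coeff_X_pow, sq0, sq1, m0] at c1 c2 c3
  -- the first-order ODE
  set y' : ℚ⟦X⟧ := d⁄dX ℚ y with hy'
  have hd2 : d⁄dX ℚ (2 : ℚ⟦X⟧) = 0 := by
    simpa using Derivation.map_natCast (d⁄dX ℚ) 2
  have hd3 : d⁄dX ℚ (3 : ℚ⟦X⟧) = 0 := by
    simpa using Derivation.map_natCast (d⁄dX ℚ) 3
  have h3 : (3 * X ^ 2 - 2 * X) * y ^ 2 + (X ^ 3 - X ^ 2) * (2 * y * y')
      + (4 * X - 3) * y + (1 - 3 * X + 2 * X ^ 2) * y' + 2 = 0 := by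
    have h := congrArg (d⁄dX ℚ) h2
    simp only [map_add, map_sub, Derivation.leibniz, Derivation.leibniz_pow, derivative_X,
      Derivation.map_one_eq_zero, hd2, hd3, smul_eq_mul, nsmul_eq_mul, map_zero,
      mul_zero, zero_mul, mul_one, one_mul, add_zero, zero_add, Nat.cast_ofNat] at h
    rw [hy']
    linear_combination h
  have key : 6 * (X ^ 1 * (X * y')) - (X ^ 0 * (X * y')) - 9 * (X ^ 2 * (X * y'))
      + 4 * (X ^ 4 * (X * y'))
      + 4 * (X ^ 4 * y) + 4 * (X ^ 3 * y) - 14 * (X ^ 2 * y) + 10 * (X ^ 1 * y)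
      - 2 * (X ^ 0 * y) + (6 * X ^ 2 - 7 * X ^ 1 + 2 * X ^ 0) = 0 := by
    linear_combination (4 * X * (X ^ 3 - X ^ 2) * y' + (6 * X ^ 3 - 4 * X ^ 2) * y
        + (2 * X ^ 2 + X - 2)) * h2
      - (X * (2 * (X ^ 3 - X ^ 2) * y + 1 - 3 * X + 2 * X ^ 2)) * h3
  refine ⟨fun n => ?_, m0, by linarith, by linarith, by linarith⟩
  have h := congrArg (coeff (n + 4)) key
  rw [e2, e4, e6, e7, e9, e14, e10] at h
  simp only [hy', map_add, map_sub, map_zero, coeff_C_mul, coeff_X_pow_mul',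
    show 1 ≤ n + 4 by omega, show 2 ≤ n + 4 by omega, show 3 ≤ n + 4 by omega,
    show 4 ≤ n + 4 by omega, show 0 ≤ n + 4 by omega, if_true,
    show n + 4 - 1 = n + 3 by omega, show n + 4 - 2 = n + 2 by omega,
    show n + 4 - 3 = n + 1 by omega, show n + 4 - 4 = n by omega, Nat.sub_zero,
    aux_coeff_stmt2, coeff_X_pow, if_neg (show ¬(n + 4 = 0) by omega),
    if_neg (show ¬(n + 4 = 1) by omega), if_neg (show ¬(n + 4 = 2) by omega)] at h
  push_cast at h
  linear_combination h
end

section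
/- If y ∈ ℚ⟦z⟧ satisfies (z³ − z²)y² + (1 − 3z + 2z²)y + (2z − 1) = 0 with y(0) = 1, then y satisfies the first-order linear inhomogeneous differential equation (6z² − 7z + 2) + (10z − 14z² + 4z³ + 4z⁴ − 2)·y + (4z⁵ − 9z³ + 6z² − z)·y' = 0, where y' denotes the formal derivative. -/
open PowerSeries in
theorem stmt3 (y : PowerSeries ℚ) (h1 : constantCoeff y = 1)
    (h2 : (X ^ 3 - X ^ 2) * y ^ 2 + (1 - 3 * X + 2 * X ^ 2) * y + (2 * X - 1) = 0) :
    (6 * X ^ 2 - 7 * X + 2) + (10 * X - 14 * X ^ 2 + 4 * X ^ 3 + 4 * X ^ 4 - 2) * y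
      + (4 * X ^ 5 - 9 * X ^ 3 + 6 * X ^ 2 - X) * PowerSeries.derivative ℚ y = 0 := by
  set d := PowerSeries.derivative ℚ y with hdef
  have hD : (3 * X ^ 2 - 2 * X) * y ^ 2 + (X ^ 3 - X ^ 2) * (2 * y * d)
      + (-3 + 4 * X) * y + (1 - 3 * X + 2 * X ^ 2) * d + 2 = 0 := by
    have h0 := congrArg (⇑(PowerSeries.derivative ℚ)) h2
    simp only [map_add, map_sub, Derivation.leibniz, Derivation.leibniz_pow,
      derivative_X, map_one, Derivation.map_one_eq_zero, map_zero, smul_eq_mul,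
      ← hdef] at h0
    have e2 : (PowerSeries.derivative ℚ) (2 : ℚ⟦X⟧) = 0 := by
      rw [show (2:ℚ⟦X⟧) = ((2:ℕ):ℚ⟦X⟧) by norm_num]; exact Derivation.map_natCast _ 2
    have e3 : (PowerSeries.derivative ℚ) (3 : ℚ⟦X⟧) = 0 := by
      rw [show (3:ℚ⟦X⟧) = ((3:ℕ):ℚ⟦X⟧) by norm_num]; exact Derivation.map_natCast _ 3
    rw [e2, e3] at h0
    linear_combination h0
  have key : ((2 * (X ^ 3 - X ^ 2)) * y + (1 - 3 * X + 2 * X ^ 2)) *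
      ((6 * X ^ 2 - 7 * X + 2) + (10 * X - 14 * X ^ 2 + 4 * X ^ 3 + 4 * X ^ 4 - 2) * y
        + (4 * X ^ 5 - 9 * X ^ 3 + 6 * X ^ 2 - X) * d) = 0 := by
    linear_combination (-4*X^4+4*X^3-5*X^2+7*X-2 : ℚ⟦X⟧) * h2
      + (4*X^5-9*X^3+6*X^2-X : ℚ⟦X⟧) * hD
  have hu : IsUnit ((2 * (X ^ 3 - X ^ 2)) * y + (1 - 3 * X + 2 * X ^ 2) : ℚ⟦X⟧) := by
    rw [PowerSeries.isUnit_iff_constantCoeff]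
    simp [h1, constantCoeff_X]
  exact (IsUnit.mul_right_eq_zero hu).mp key
end

section
/- Let W ∈ ℚ⟦z⟧ satisfy W(0)=1 and W² = (1−z)(1−2z)(1−3z−2z²). Then the power series y with 2(1−2z)z²·y = 1 − 3z + 2z² − W satisfies (z² − 2z³)y² − (1 − 3z + 2z²)y + (1 − z) = 0 and has constant term 1. -/
open PowerSeries in
theorem stmt14 (W y : PowerSeries ℚ) (hW0 : constantCoeff W = 1)
    (hW : W ^ 2 = (1 - X) * (1 - 2 * X) * (1 - 3 * X - 2 * X ^ 2))
    (hy : 2 * (1 - 2 * X) * X ^ 2 * y = 1 - 3 * X + 2 * X ^ 2 - W) :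
    (X ^ 2 - 2 * X ^ 3) * y ^ 2 - (1 - 3 * X + 2 * X ^ 2) * y + (1 - X) = 0 ∧
    constantCoeff y = 1 := by
  set A : PowerSeries ℚ := 2 * (1 - 2 * X) * X ^ 2 with hA
  have key : (4 * X ^ 2 * (1 - 2 * X)) *
      ((X ^ 2 - 2 * X ^ 3) * y ^ 2 - (1 - 3 * X + 2 * X ^ 2) * y + (1 - X)) = 0 := by
    linear_combination (-(1 - 3 * X + 2 * X ^ 2 - A * y + W)) * hy + hW
  have hc : (4 * X ^ 2 * (1 - 2 * X) : PowerSeries ℚ) ≠ 0 := by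
    apply mul_ne_zero (mul_ne_zero ?_ ?_) ?_
    · intro h
      have := congrArg (constantCoeff) h
      rw [map_ofNat] at this
      norm_num at this
    · exact pow_ne_zero _ X_ne_zero
    · intro h
      have := congrArg (constantCoeff) h
      simp at this
  have hE : (X ^ 2 - 2 * X ^ 3) * y ^ 2 - (1 - 3 * X + 2 * X ^ 2) * y + (1 - X) = 0 :=
    mul_left_cancel₀ hc (key.trans (mul_zero _).symm)
  refine ⟨hE, ?_⟩
  have := congrArg (constantCoeff) hE
  simp at this
  linarith
end

section
/- For the sequence m : ℕ → ℤ defined by m(0)=1, m(1)=1, m(2)=2, m(3)=5 and the recurrence (n+6)·m(n+4) = 4(n+1)·m(n) + 4·m(n+1) − (9n+32)·m(n+2) + 2(3n+14)·m(n+3), all values m(n) are positive integers, and m(4)=14, m(5)=41, m(6)=123, m(7)=375, m(8)=1158, m(9)=3615. -/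
namespace S15
def a : ℕ → ℤ
  | 0 => 1
  | 1 => 1
  | n + 2 =>
    3 * a (n + 1) - 2 * a n
      + ∑ i ∈ (Finset.range (n + 1)).attach, a i.1 * a (n - i.1)
      - ∑ i ∈ (Finset.range n).attach, a i.1 * a (n - 1 - i.1)
  decreasing_by all_goals ((try have := Finset.mem_range.mp i.2); omega)

def cc (n : ℕ) : ℤ := ∑ i ∈ Finset.range (n + 1), a i * a (n - i)

lemma hE (n : ℕ) : a (n + 2) = 3 * a (n + 1) - 2 * a n
      + (∑ i ∈ Finset.range (n + 1), a i * a (n - i))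
      - ∑ i ∈ Finset.range n, a i * a (n - 1 - i) := by
  rw [a]
  rw [Finset.sum_attach (Finset.range (n+1)) (fun i => a i * a (n - i)),
      Finset.sum_attach (Finset.range n) (fun i => a i * a (n - 1 - i))]

lemma hE' (n : ℕ) : a (n + 3) = 3 * a (n + 2) - 2 * a (n + 1) + cc (n + 1) - cc n := by
  have h := hE (n + 1)
  have h2 : ∑ i ∈ Finset.range (n + 1), a i * a (n + 1 - 1 - i)
      = ∑ i ∈ Finset.range (n + 1), a i * a (n - i) := by
    apply Finset.sum_congr rfl
    intro i hi
    congr 2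
  exact h.trans (by rw [h2]; rfl)
lemma ha0 : a 0 = 1 := by rw [a]
lemma ha1 : a 1 = 1 := by rw [a]
lemma ha2 : a 2 = 2 := by
  have := hE 0
  norm_num [Finset.sum_range_succ, ha0, ha1] at this
  exact this
lemma ha3 : a 3 = 5 := by
  have := hE 1
  norm_num [Finset.sum_range_succ, ha0, ha1, ha2] at this
  exact this
lemma ha4 : a 4 = 14 := by
  have := hE 2
  norm_num [Finset.sum_range_succ, ha0, ha1, ha2, ha3] at this
  exact this
lemma ha5 : a 5 = 41 := by
  have := hE 3
  norm_num [Finset.sum_range_succ, ha0, ha1, ha2, ha3, ha4] at this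
  exact this
lemma ha6 : a 6 = 123 := by
  have := hE 4
  norm_num [Finset.sum_range_succ, ha0, ha1, ha2, ha3, ha4, ha5] at this
  exact this
lemma ha7 : a 7 = 375 := by
  have := hE 5
  norm_num [Finset.sum_range_succ, ha0, ha1, ha2, ha3, ha4, ha5, ha6] at this
  exact this
lemma ha8 : a 8 = 1158 := by
  have := hE 6
  norm_num [Finset.sum_range_succ, ha0, ha1, ha2, ha3, ha4, ha5, ha6, ha7] at this
  exact this
lemma ha9 : a 9 = 3615 := by
  have := hE 7
  norm_num [Finset.sum_range_succ, ha0, ha1, ha2, ha3, ha4, ha5, ha6, ha7, ha8] at this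
  exact this
lemma pos_mono : ∀ n, 0 < a n ∧ a n ≤ a (n + 1) := by
  intro n
  induction n using Nat.strong_induction_on with
  | _ n ih =>
    match n with
    | 0 => rw [ha0, ha1]; norm_num
    | (m + 1) =>
      have ihm := ih m (by omega)
      constructor
      · exact lt_of_lt_of_le ihm.1 ihm.2
      · have h := hE m
        have h0 : a (m - m) = a 0 := by congr 1; omega
        have hS1 : ∑ i ∈ Finset.range (m + 1), a i * a (m - i)
            = (∑ i ∈ Finset.range m, a i * a (m - i)) + a m * 1 := by
          rw [Finset.sum_range_succ, h0, ha0]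
        have hS2 : ∑ i ∈ Finset.range m, a i * a (m - 1 - i)
            ≤ ∑ i ∈ Finset.range m, a i * a (m - i) := by
          apply Finset.sum_le_sum
          intro i hi
          have hi' := Finset.mem_range.mp hi
          have hk := ih (m - 1 - i) (by omega)
          have hkk : m - 1 - i + 1 = m - i := by omega
          rw [hkk] at hk
          exact mul_le_mul_of_nonneg_left hk.2 (ih i (by omega)).1.le
        have hm := ihm.1
        have hmm := ihm.2
        rw [h, hS1]
        linarith
lemma apos (n : ℕ) : 0 < a n := (pos_mono n).1
open PowerSeries

noncomputable def F : PowerSeries ℤ := PowerSeries.mk a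

lemma hc (n : ℕ) : coeff n (F * F) = cc n := by
  rw [coeff_mul, Finset.Nat.sum_antidiagonal_eq_sum_range_succ_mk, cc]
  apply Finset.sum_congr rfl
  intro i hi
  rw [F, coeff_mk, coeff_mk]

lemma hPhi : X^2 * (F*F) - X^3*(F*F) - F + 3*(X^1*F) - 2*(X^2*F) + 1 - 2*X^1 = 0 := by
  ext n
  simp only [map_add, map_sub, map_zero, coeff_one,
    show (3:ℤ⟦X⟧) = C (R := ℤ) 3 from (map_ofNat _ 3).symm,
    show (2:ℤ⟦X⟧) = C (R := ℤ) 2 from (map_ofNat _ 2).symm,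
    coeff_C_mul, coeff_X_pow_mul', coeff_X_pow, hc]
  rcases n with _|_|_|m
  · norm_num [F, coeff_mk, ha0]
  · norm_num [F, coeff_mk, ha0, ha1]
  · norm_num [F, coeff_mk, ha0, ha1, ha2, cc, Finset.sum_range_succ]
  · have h5 : m + 3 - 2 = m + 1 := by omega
    have h6 : m + 3 - 3 = m := by omega
    have h7 : m + 3 - 1 = m + 2 := by omega
    norm_num [F, coeff_mk, h5, h6, h7, hE' m]
lemma hD3 : (d⁄dX ℤ) (3:ℤ⟦X⟧) = 0 := by
  rw [← map_ofNat (C (R := ℤ)) 3, derivative_C]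
lemma hD2 : (d⁄dX ℤ) (2:ℤ⟦X⟧) = 0 := by
  rw [← map_ofNat (C (R := ℤ)) 2, derivative_C]

lemma hPhi' : (2*X - 3*X^2)*(F*F) + (X^2 - X^3)*(2*F*(d⁄dX ℤ F)) + 3*F - 4*(X*F)
    - (1 - 3*X + 2*X^2)*(d⁄dX ℤ F) - 2 = 0 := by
  have hd := congrArg (⇑(d⁄dX ℤ)) hPhi
  simp only [map_add, map_sub, map_zero, Derivation.leibniz, Derivation.leibniz_pow,
    derivative_X, hD3, hD2, smul_eq_mul, Derivation.map_one_eq_zero, mul_one, one_mul, mul_zero,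
    zero_mul, add_zero, zero_add, nsmul_eq_mul, Nat.cast_ofNat, pow_one] at hd
  linear_combination hd
lemma hkey : X^1*(d⁄dX ℤ F) - 6*(X^2*(d⁄dX ℤ F)) + 9*(X^3*(d⁄dX ℤ F)) - 4*(X^5*(d⁄dX ℤ F))
    = -(2*F) + 10*(X^1*F) - 14*(X^2*F) + 4*(X^3*F) + 4*(X^4*F) + 2 - 7*X^1 + 6*X^2 := by
  linear_combination (X*(2*(X^2 - X^3)*F + (-1 + 3*X - 2*X^2))) * hPhi'
    + (-(4*X*(X^2-X^3)*(d⁄dX ℤ F)) - 2*X*(2*X-3*X^2)*F - (2 - X - 2*X^2)) * hPhi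
lemma hrec (n : ℕ) : ((n:ℤ) + 6) * a (n + 4)
    = 4 * ((n:ℤ) + 1) * a n + 4 * a (n + 1) - (9 * (n:ℤ) + 32) * a (n + 2)
      + 2 * (3 * (n:ℤ) + 14) * a (n + 3) := by
  rcases n with _|k
  · norm_num [ha0, ha1, ha2, ha3, ha4]
  · have h := congrArg (⇑(coeff (k + 5))) hkey
    simp only [map_add, map_sub, map_neg,
      show (2:ℤ⟦X⟧) = C (R := ℤ) 2 from (map_ofNat _ 2).symm,
      show (4:ℤ⟦X⟧) = C (R := ℤ) 4 from (map_ofNat _ 4).symm,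
      show (6:ℤ⟦X⟧) = C (R := ℤ) 6 from (map_ofNat _ 6).symm,
      show (7:ℤ⟦X⟧) = C (R := ℤ) 7 from (map_ofNat _ 7).symm,
      show (9:ℤ⟦X⟧) = C (R := ℤ) 9 from (map_ofNat _ 9).symm,
      show (10:ℤ⟦X⟧) = C (R := ℤ) 10 from (map_ofNat _ 10).symm,
      show (14:ℤ⟦X⟧) = C (R := ℤ) 14 from (map_ofNat _ 14).symm,
      coeff_C_mul, coeff_X_pow_mul', coeff_derivative, coeff_C, coeff_X_pow,
      F, coeff_mk] at h
    split_ifs at h <;> try omega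
    all_goals try exact (‹False›).elim
    have e1 : k + 5 - 1 = k + 4 := by omega
    have e2 : k + 5 - 2 = k + 3 := by omega
    have e3 : k + 5 - 3 = k + 2 := by omega
    have e4 : k + 5 - 4 = k + 1 := by omega
    have e5 : k + 5 - 5 = k := by omega
    rw [e1, e2, e3, e4, e5] at h
    norm_num at h ⊢
    linarith
end S15

theorem stmt15 :
    ∃ m : ℕ → ℤ,
      (m 0 = 1 ∧ m 1 = 1 ∧ m 2 = 2 ∧ m 3 = 5 ∧
        ∀ n : ℕ, ((n : ℤ) + 6) * m (n + 4)
          = 4 * ((n : ℤ) + 1) * m n + 4 * m (n + 1) - (9 * (n : ℤ) + 32) * m (n + 2)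
            + 2 * (3 * (n : ℤ) + 14) * m (n + 3)) ∧
      (∀ n : ℕ, 0 < m n) ∧
      m 4 = 14 ∧ m 5 = 41 ∧ m 6 = 123 ∧ m 7 = 375 ∧ m 8 = 1158 ∧ m 9 = 3615 := by
  exact ⟨S15.a, ⟨S15.ha0, S15.ha1, S15.ha2, S15.ha3, S15.hrec⟩, S15.apos,
    S15.ha4, S15.ha5, S15.ha6, S15.ha7, S15.ha8, S15.ha9⟩
end
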